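/- For all integers n ≥ 1, r ≥ 1 and 0 ≤ d ≤ n, the number of r-Schröder paths of size n having exactly n−d diagonal steps is S_{n,d}^r = (1/(dr+1))·C(n,d)·C(dr+n, n), i.e. (dr+1)·|Sch_{n,d}^r| = C(n,d)·C(dr+n, n). -/

import Mathlib

/-- Steps of an `r`-Schröder path: down `(0,-1)`, right `(1,0)`, diagonal `(r,-1)`. -/
inductive SStep : Type
  | down | right | diag
deriving DecidableEq

/-- Displacement of a step for slope parameter `r`. -/
def sDisp (r : ℤ) : SStep → ℤ × ℤ
  | .down => (0, -1)
  | .right => (1, 0)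
  | .diag => (r, -1)

/-- Position reached after performing the steps `l`, starting at `(0, n)`. -/
def sPos (r n : ℤ) (l : List SStep) : ℤ × ℤ :=
  l.foldl (fun p s => p + sDisp r s) (0, n)

/-- `α` is an `r`-Schröder path of size `n`: it goes from `(0,n)` to `(r*n, 0)` and never
passes strictly above the line segment joining `(0,n)` and `(r*n,0)`
(the segment lies on the line `x + r*y = r*n`). -/
def IsSchroder (r n : ℕ) (α : List SStep) : Prop :=
  sPos r n α = ((r : ℤ) * n, 0) ∧
  ∀ β, β <+: α → (sPos r n β).1 + (r : ℤ) * (sPos r n β).2 ≤ (r : ℤ) * n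

/-- `Sch r n d` : the set of `r`-Schröder paths of size `n` with exactly `n - d`
diagonal steps. -/
def Sch (r n d : ℕ) : Set (List SStep) :=
  {α | IsSchroder r n α ∧ α.count SStep.diag = n - d}

namespace SchAux

instance : Fintype SStep :=
  ⟨⟨{.down, .right, .diag}, by decide⟩, fun x => by cases x <;> decide⟩

/-- weight of a step -/
def val (r : ℕ) : SStep → ℤ
  | .down => r
  | .right => -1
  | .diag => 0

lemma foldl_eq (r : ℤ) (l : List SStep) (p : ℤ × ℤ) :
    l.foldl (fun p s => p + sDisp r s) p = p + (l.map (sDisp r)).sum := by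
  induction l generalizing p with
  | nil => simp
  | cons a t ih => simp [ih, add_assoc]


lemma map_sum_eq (r : ℕ) (l : List SStep) :
    (l.map (sDisp r)).sum = ((l.count .right : ℤ) + r * l.count .diag,
      -(l.count .down : ℤ) - l.count .diag) := by
  induction l with
  | nil => simp; rfl
  | cons a t ih =>
    simp only [List.map_cons, List.sum_cons, ih, List.count_cons]
    rcases a <;> apply Prod.ext <;> simp [sDisp] <;> push_cast <;> ring

lemma sPos_eq (r n : ℕ) (l : List SStep) :
    sPos r n l = ((l.count .right : ℤ) + r * l.count .diag,
      (n : ℤ) - l.count .down - l.count .diag) := by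
  rw [sPos, foldl_eq, map_sum_eq, Prod.mk_add_mk]
  apply Prod.ext <;> simp <;> ring

lemma length_eq (l : List SStep) :
    l.length = l.count .down + l.count .right + l.count .diag := by
  induction l with
  | nil => simp
  | cons a t ih => rcases a <;> simp [List.count_cons, ih] <;> omega

lemma sum_val (r : ℕ) (l : List SStep) :
    ((l.map (val r)).sum) = r * l.count .down - l.count .right := by
  induction l with
  | nil => simp
  | cons a t ih =>
    rcases a <;> simp [List.count_cons, ih, val] <;> push_cast <;> ring

/-- characterization of Sch by counts and prefix condition -/
lemma mem_Sch_iff (r n d : ℕ) (hd : d ≤ n) (l : List SStep) :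
    l ∈ Sch r n d ↔
      l.count .down = d ∧ l.count .right = r * d ∧ l.count .diag = n - d ∧
      ∀ j, ((l.take j).count .right : ℤ) ≤ r * (l.take j).count .down := by
  constructor
  · rintro ⟨⟨hend, hpre⟩, hdiag⟩
    rw [sPos_eq, Prod.ext_iff] at hend
    obtain ⟨h1, h2⟩ := hend
    simp only at h1 h2
    have hdc : (l.count SStep.diag : ℤ) = (n : ℤ) - d := by
      rw [hdiag]; push_cast; omega
    have hdown : l.count .down = d := by omega
    have hright : l.count .right = r * d := by
      have : (l.count SStep.right : ℤ) = r * d := by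
        rw [hdc] at h1; ring_nf at h1 ⊢; linarith
      exact_mod_cast this
    refine ⟨hdown, hright, hdiag, fun j => ?_⟩
    have h := hpre (l.take j) (List.take_prefix j l)
    rw [sPos_eq] at h
    simp only at h
    ring_nf at h ⊢
    linarith
  · rintro ⟨h1, h2, h3, h4⟩
    have hdc : (l.count SStep.diag : ℤ) = (n : ℤ) - d := by rw [h3]; push_cast; omega
    refine ⟨⟨?_, fun β hβ => ?_⟩, h3⟩
    · rw [sPos_eq, Prod.ext_iff]
      refine ⟨?_, by simp; omega⟩
      simp only
      rw [h2, hdc]; push_cast; ring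
    · obtain ⟨j, rfl⟩ : ∃ j, β = l.take j := by
        rw [List.prefix_iff_eq_take] at hβ; exact ⟨β.length, hβ⟩
      have h := h4 j
      rw [sPos_eq]
      simp only
      ring_nf at h ⊢
      linarith
section Cycle
variable (g : ℕ → ℤ) (M : ℕ)

def P (j : ℕ) : ℤ := ∑ i ∈ Finset.range j, g i

lemma P_succ (j : ℕ) : P g (j + 1) = P g j + g j := Finset.sum_range_succ g j

lemma P_add (hper : ∀ i, g (i + M) = g i) (j : ℕ) :
    P g (j + M) = P g j + P g M := by
  induction j with
  | zero => simp [P]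
  | succ j ih =>
    have : j + 1 + M = (j + M) + 1 := by omega
    rw [this, P_succ, ih, hper, P_succ]; ring

/-- the rotation starting at index `k` stays nonnegative -/
def GoodIdx (k : ℕ) : Prop := ∀ t < M, 0 ≤ P g (k + t) - P g k

lemma good_unique' (hper : ∀ i, g (i + M) = g i) (hsum : P g M = -1)
    {k k' : ℕ} (hk : k < M) (hk' : k' < M) (hlt : k < k')
    (h1 : GoodIdx g M k) (h2 : GoodIdx g M k') : False := by
  have e1 : 0 ≤ P g k' - P g k := by
    have := h1 (k' - k) (by omega)
    rwa [show k + (k' - k) = k' by omega] at this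
  have e2 : 0 ≤ P g (k + M) - P g k' := by
    have := h2 (k + M - k') (by omega)
    rwa [show k' + (k + M - k') = k + M by omega] at this
  rw [P_add g M hper, hsum] at e2
  linarith

theorem cycle_exists_unique (hM : 0 < M) (hper : ∀ i, g (i + M) = g i)
    (hsum : P g M = -1) : ∃! k, k < M ∧ GoodIdx g M k := by
  classical
  have hex : ∃ j, j < M ∧ ∀ i < M, P g j ≤ P g i := by
    obtain ⟨j, hj, hmin⟩ := Finset.exists_min_image (Finset.range M) (P g)
      ⟨0, Finset.mem_range.2 hM⟩
    exact ⟨j, Finset.mem_range.1 hj, fun i hi => hmin i (Finset.mem_range.2 hi)⟩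
  obtain ⟨k, hkM, hmink, hleast⟩ :
      ∃ k, k < M ∧ (∀ i < M, P g k ≤ P g i) ∧
        ∀ j < k, ¬(j < M ∧ ∀ i < M, P g j ≤ P g i) :=
    ⟨Nat.find hex, (Nat.find_spec hex).1, (Nat.find_spec hex).2,
      fun j hj => Nat.find_min hex hj⟩
  have hgood : GoodIdx g M k := by
    intro t ht
    by_cases hlt : k + t < M
    · have := hmink (k + t) hlt
      linarith
    · have hjk : k + t - M < k := by omega
      have hnp := hleast _ hjk
      push_neg at hnp
      set j := k + t - M with hj
      obtain ⟨i, hi, hPi⟩ := hnp (by omega)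
      have h1 : P g k ≤ P g i := hmink i hi
      have h2 : P g k < P g j := lt_of_le_of_lt h1 hPi
      have : P g (k + t) = P g j - 1 := by
        have hkt : k + t = j + M := by
          rw [hj, Nat.sub_add_cancel (Nat.le_of_not_lt hlt)]
        rw [hkt, P_add g M hper, hsum]; ring
      linarith
  refine ⟨k, ⟨hkM, hgood⟩, ?_⟩
  rintro y ⟨hyM, hygood⟩
  rcases lt_trichotomy y k with h | h | h
  · exact absurd (good_unique' g M hper hsum hyM hkM h hygood hgood) (by simp)
  · exact h
  · exact absurd (good_unique' g M hper hsum hkM hyM h hgood hygood) (by simp)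

end Cycle

section Tuples
variable {N : ℕ}

def cnt (f : Fin N → SStep) (s : SStep) : ℕ := (Finset.univ.filter fun i => f i = s).card

lemma cnt_eq (f : Fin N → SStep) (s : SStep) :
    cnt f s = ∑ i : Fin N, if f i = s then 1 else 0 := Finset.card_filter _ _

lemma count_ofFn (f : Fin N → SStep) (s : SStep) : (List.ofFn f).count s = cnt f s := by
  induction N with
  | zero => simp [cnt]
  | succ N ih =>
    rw [List.ofFn_succ, List.count_cons, ih, cnt_eq, cnt_eq, Fin.sum_univ_succ]
    by_cases h : f 0 = s <;> simp [h, Function.comp] <;> omega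

lemma cnt_sum (f : Fin N → SStep) : cnt f .down + cnt f .right + cnt f .diag = N := by
  have h := length_eq (List.ofFn f)
  simp only [count_ofFn, List.length_ofFn] at h
  omega

def gOf (r : ℕ) (f : Fin (N + 1) → SStep) : ℕ → ℤ :=
  fun i => val r (f ⟨i % (N + 1), Nat.mod_lt _ (Nat.succ_pos N)⟩)

lemma gOf_lt (r : ℕ) (f : Fin (N + 1) → SStep) {i : ℕ} (h : i < N + 1) :
    gOf r f i = val r (f ⟨i, h⟩) := by simp [gOf, Nat.mod_eq_of_lt h]

lemma gOf_per (r : ℕ) (f : Fin (N + 1) → SStep) (i : ℕ) :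
    gOf r f (i + (N + 1)) = gOf r f i := by simp [gOf, Nat.add_mod_right]

def rotF (k : Fin (N + 1)) (f : Fin (N + 1) → SStep) : Fin (N + 1) → SStep :=
  fun i => f (i + k)

lemma rotF_rotF (k j : Fin (N + 1)) (f : Fin (N + 1) → SStep) :
    rotF k (rotF j f) = rotF (k + j) f := by
  funext i; simp [rotF, add_assoc]

lemma rotF_zero (f : Fin (N + 1) → SStep) : rotF 0 f = f := by
  funext i; simp [rotF]

lemma gOf_rotF (r : ℕ) (k : Fin (N + 1)) (f : Fin (N + 1) → SStep) (i : ℕ) :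
    gOf r (rotF k f) i = gOf r f (i + k.val) := by
  simp only [gOf, rotF]
  exact congrArg (fun x => val r (f x)) (Fin.ext (by simp [Fin.add_def, Nat.mod_add_mod]))

lemma P_shift (g : ℕ → ℤ) (a t : ℕ) :
    P (fun i => g (i + a)) t = P g (a + t) - P g a := by
  induction t with
  | zero => simp [P]
  | succ t ih =>
    rw [P_succ, ih, show a + (t + 1) = (a + t) + 1 by omega, P_succ,
      show t + a = a + t by omega]
    ring

lemma P_gOf_rot (r : ℕ) (k : Fin (N + 1)) (f : Fin (N + 1) → SStep) (t : ℕ) :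
    P (gOf r (rotF k f)) t = P (gOf r f) (k.val + t) - P (gOf r f) k.val := by
  have h : gOf r (rotF k f) = fun i => gOf r f (i + k.val) := funext (gOf_rotF r k f)
  rw [h, P_shift]

lemma P_eq_take (r : ℕ) (f : Fin (N + 1) → SStep) :
    ∀ j, j ≤ N + 1 → P (gOf r f) j = (((List.ofFn f).take j).map (val r)).sum := by
  intro j
  induction j with
  | zero => simp [P]
  | succ j ih =>
    intro hj
    have hj' : j < N + 1 := hj
    have hlen : j < ((List.ofFn f).map (val r)).length := by simp [hj']
    rw [P_succ, ih (le_of_lt hj), List.map_take, List.map_take, List.sum_take_succ _ j hlen,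
      gOf_lt r f hj']
    rw [List.getElem_map, List.getElem_ofFn]

end Tuples

section Count
variable (r n d : ℕ)

def SFun : Finset (Fin (n + r * d + 1) → SStep) :=
  Finset.univ.filter fun f => cnt f .down = d ∧ cnt f .diag = n - d

def GoodF {N : ℕ} (r : ℕ) (f : Fin (N + 1) → SStep) : Prop :=
  ∀ j < N + 1, 0 ≤ P (gOf r f) j

instance {N : ℕ} : DecidablePred (GoodF (N := N) r) := fun _ =>
  Nat.decidableBallLT _ _

def GoodS : Finset (Fin (n + r * d + 1) → SStep) :=
  (SFun r n d).filter (GoodF r)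


variable {r n d}

lemma mem_SFun {f : Fin (n + r * d + 1) → SStep} :
    f ∈ SFun r n d ↔ cnt f .down = d ∧ cnt f .diag = n - d := by
  simp [SFun]

lemma cnt_right_of_mem (hd : d ≤ n) {f : Fin (n + r * d + 1) → SStep}
    (hf : f ∈ SFun r n d) : cnt f .right = r * d + 1 := by
  obtain ⟨h1, h2⟩ := mem_SFun.1 hf
  have h3 := cnt_sum f
  omega

lemma sumP_eq (hd : d ≤ n) {f : Fin (n + r * d + 1) → SStep}
    (hf : f ∈ SFun r n d) : P (gOf r f) (n + r * d + 1) = -1 := by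
  rw [P_eq_take r f _ le_rfl, List.take_of_length_le (by simp), sum_val, count_ofFn, count_ofFn,
    (mem_SFun.1 hf).1, cnt_right_of_mem hd hf]
  push_cast
  ring

lemma cnt_rotF (k : Fin (n + r * d + 1)) (f : Fin (n + r * d + 1) → SStep) (s : SStep) :
    cnt (rotF k f) s = cnt f s := by
  unfold cnt rotF
  apply Finset.card_bij' (i := fun a _ => a + k) (j := fun a _ => a - k)
  · intro a ha
    simpa using Finset.mem_filter.1 ha |>.2
  · intro a ha
    simp only [Finset.mem_filter, Finset.mem_univ, true_and] at ha ⊢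
    rwa [sub_add_cancel]
  · intro a _; simp
  · intro a _; simp

lemma rotF_mem_SFun (k : Fin (n + r * d + 1)) {f : Fin (n + r * d + 1) → SStep}
    (hf : f ∈ SFun r n d) : rotF k f ∈ SFun r n d := by
  rw [mem_SFun] at hf ⊢
  simp [cnt_rotF, hf.1, hf.2]

lemma goodF_rot_iff (k : Fin (n + r * d + 1)) (f : Fin (n + r * d + 1) → SStep) :
    GoodF r (rotF k f) ↔ GoodIdx (gOf r f) (n + r * d + 1) k.val := by
  unfold GoodF GoodIdx
  constructor <;> intro h t ht
  · have := h t ht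
    rwa [P_gOf_rot] at this
  · rw [P_gOf_rot]
    exact h t ht

lemma card_SFun_eq_mul (hd : d ≤ n) :
    (SFun r n d).card = (n + r * d + 1) * (GoodS r n d).card := by
  have key : ((Finset.univ : Finset (Fin (n + r * d + 1))) ×ˢ GoodS r n d).card
      = (SFun r n d).card := by
    apply Finset.card_bij (i := fun p _ => rotF p.1 p.2)
    · rintro ⟨k, g⟩ hp
      simp only [Finset.mem_product] at hp
      exact rotF_mem_SFun k (Finset.mem_filter.1 hp.2).1
    · rintro ⟨k₁, g₁⟩ hp₁ ⟨k₂, g₂⟩ hp₂ heq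
      simp only [Finset.mem_product, GoodS, Finset.mem_filter] at hp₁ hp₂
      set F := rotF k₁ g₁ with hF
      have hF2 : rotF k₂ g₂ = F := heq.symm
      have hFS : F ∈ SFun r n d := rotF_mem_SFun k₁ hp₁.2.1
      have hg₁ : g₁ = rotF (-k₁) F := by
        rw [hF, rotF_rotF, neg_add_cancel, rotF_zero]
      have hg₂ : g₂ = rotF (-k₂) F := by
        rw [← hF2, rotF_rotF, neg_add_cancel, rotF_zero]
      obtain ⟨k₀, _, huniq⟩ := cycle_exists_unique (gOf r F) (n + r * d + 1)
        (Nat.succ_pos _) (gOf_per r F) (sumP_eq hd hFS)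
      have e₁ : (-k₁ : Fin _).val = k₀ := by
        apply huniq
        exact ⟨(-k₁ : Fin _).isLt, (goodF_rot_iff _ F).1 (hg₁ ▸ hp₁.2.2)⟩
      have e₂ : (-k₂ : Fin _).val = k₀ := by
        apply huniq
        exact ⟨(-k₂ : Fin _).isLt, (goodF_rot_iff _ F).1 (hg₂ ▸ hp₂.2.2)⟩
      have hk : k₁ = k₂ := by
        have : (-k₁ : Fin _) = -k₂ := Fin.ext (e₁.trans e₂.symm)
        exact neg_injective this
      refine Prod.ext hk ?_
      rw [hg₁, hg₂, hk]
    · intro f hf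
      obtain ⟨k₀, ⟨hk₀, hgood⟩, _⟩ := cycle_exists_unique (gOf r f) (n + r * d + 1)
        (Nat.succ_pos _) (gOf_per r f) (sumP_eq hd hf)
      refine ⟨(-(⟨k₀, hk₀⟩ : Fin _), rotF ⟨k₀, hk₀⟩ f), ?_, ?_⟩
      · simp only [Finset.mem_product, Finset.mem_univ, true_and, GoodS, Finset.mem_filter]
        refine ⟨rotF_mem_SFun _ hf, ?_⟩
        exact (goodF_rot_iff _ f).2 hgood
      · rw [rotF_rotF, neg_add_cancel, rotF_zero]
  rw [← key, Finset.card_product]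
  simp


lemma card_SFun (hd : d ≤ n) :
    (SFun r n d).card =
      Nat.choose (n + r * d + 1) d * Nat.choose (n + r * d + 1 - d) (n - d) := by
  classical
  have hbij : (SFun r n d).card =
      ((Finset.univ.powersetCard d).sigma fun A =>
        (Aᶜ : Finset (Fin (n + r * d + 1))).powersetCard (n - d)).card := by
    refine Finset.card_bij'
      (fun f _ => (⟨Finset.univ.filter (fun i => f i = .down),
        Finset.univ.filter (fun i => f i = .diag)⟩ :
          Σ _ : Finset (Fin (n + r * d + 1)), Finset (Fin (n + r * d + 1))))
      (fun p _ => fun i => if i ∈ p.1 then .down else if i ∈ p.2 then .diag else .right)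
      ?hi ?hj ?left ?right
    case hi =>
      intro f hf
      obtain ⟨h1, h2⟩ := mem_SFun.1 hf
      simp only [Finset.mem_sigma, Finset.mem_powersetCard]
      refine ⟨⟨Finset.subset_univ _, h1⟩, ?_, h2⟩
      intro i hi
      simp only [Finset.mem_filter, Finset.mem_univ, true_and] at hi
      simp only [Finset.mem_compl, Finset.mem_filter, Finset.mem_univ, true_and, hi]
      simp
    case hj =>
      rintro ⟨A, B⟩ hp
      simp only [Finset.mem_sigma, Finset.mem_powersetCard] at hp
      obtain ⟨⟨-, hA⟩, hBsub, hB⟩ := hp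
      rw [mem_SFun]
      dsimp only
      constructor
      · have e : (Finset.univ.filter fun i =>
            (if i ∈ A then SStep.down else if i ∈ B then SStep.diag else SStep.right)
              = SStep.down) = A := by
          ext i
          simp only [Finset.mem_filter, Finset.mem_univ, true_and]
          constructor
          · intro h
            by_contra hiA
            rw [if_neg hiA] at h
            split at h <;> simp_all
          · intro h; rw [if_pos h]
        rw [cnt, e]
        exact hA
      · have e : (Finset.univ.filter fun i =>
            (if i ∈ A then SStep.down else if i ∈ B then SStep.diag else SStep.right)
              = SStep.diag) = B := by
          ext i
          simp only [Finset.mem_filter, Finset.mem_univ, true_and]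
          constructor
          · intro h
            by_contra hiB
            by_cases hiA : i ∈ A
            · rw [if_pos hiA] at h; simp_all
            · rw [if_neg hiA, if_neg hiB] at h; simp_all
          · intro h
            have hiA : i ∉ A := by
              have := hBsub h
              simpa [Finset.mem_compl] using this
            rw [if_neg hiA, if_pos h]
        rw [cnt, e]
        exact hB
    case left =>
      intro f hf
      funext i
      rcases hfi : f i with _ | _ | _ <;>
        simp [Finset.mem_filter, hfi]
    case right =>
      rintro ⟨A, B⟩ hp
      simp only [Finset.mem_sigma, Finset.mem_powersetCard] at hp
      obtain ⟨⟨-, hA⟩, hBsub, hB⟩ := hp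
      have hq : ∀ i, i ∈ B → i ∉ A := by
        intro i hi
        simpa [Finset.mem_compl] using hBsub hi
      dsimp only
      have e1 : (Finset.univ.filter fun i =>
          (if i ∈ A then SStep.down else if i ∈ B then SStep.diag else SStep.right)
            = SStep.down) = A := by
        ext i
        simp only [Finset.mem_filter, Finset.mem_univ, true_and]
        constructor
        · intro h
          by_contra hiA
          rw [if_neg hiA] at h
          split at h <;> simp_all
        · intro h; rw [if_pos h]
      have e2 : (Finset.univ.filter fun i =>
          (if i ∈ A then SStep.down else if i ∈ B then SStep.diag else SStep.right)
            = SStep.diag) = B := by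
        ext i
        simp only [Finset.mem_filter, Finset.mem_univ, true_and]
        constructor
        · intro h
          by_contra hiB
          by_cases hiA : i ∈ A
          · rw [if_pos hiA] at h; simp_all
          · rw [if_neg hiA, if_neg hiB] at h; simp_all
        · intro h
          rw [if_neg (hq i h), if_pos h]
      rw [e1, e2]
  rw [hbij, Finset.card_sigma]
  have hterm : ∀ A ∈ Finset.univ.powersetCard d,
      ((Aᶜ : Finset (Fin (n + r * d + 1))).powersetCard (n - d)).card
        = Nat.choose (n + r * d + 1 - d) (n - d) := by
    intro A hA
    rw [Finset.card_powersetCard, Finset.card_compl,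
      (Finset.mem_powersetCard.1 hA).2, Fintype.card_fin]
  rw [Finset.sum_congr rfl hterm, Finset.sum_const, Finset.card_powersetCard,
    Finset.card_univ, Fintype.card_fin, smul_eq_mul]

end Count

section Bridge
variable {r n d : ℕ}

def psi (f : Fin (n + r * d + 1) → SStep) : List SStep :=
  List.ofFn fun i : Fin (n + r * d) => f i.castSucc

lemma ofFn_eq_psi (f : Fin (n + r * d + 1) → SStep) :
    List.ofFn f = psi f ++ [f (Fin.last (n + r * d))] := by
  rw [List.ofFn_succ', List.concat_eq_append, psi]

lemma mem_GoodS {f : Fin (n + r * d + 1) → SStep} :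
    f ∈ GoodS r n d ↔ f ∈ SFun r n d ∧ GoodF r f := Finset.mem_filter

lemma last_right (hd : d ≤ n) {f : Fin (n + r * d + 1) → SStep}
    (hf : f ∈ GoodS r n d) :
    f (Fin.last (n + r * d)) = .right ∧ P (gOf r f) (n + r * d) = 0 := by
  obtain ⟨hfS, hgood⟩ := mem_GoodS.1 hf
  have h1 : P (gOf r f) (n + r * d + 1) = -1 := sumP_eq hd hfS
  have h2 : 0 ≤ P (gOf r f) (n + r * d) := hgood _ (by omega)
  have h3 : P (gOf r f) (n + r * d + 1) =
      P (gOf r f) (n + r * d) + gOf r f (n + r * d) := P_succ _ _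
  have h4 : gOf r f (n + r * d) = val r (f (Fin.last (n + r * d))) := by
    rw [gOf_lt r f (Nat.lt_succ_self _)]
    rfl
  rcases hlast : f (Fin.last (n + r * d)) with _ | _ | _ <;>
    rw [hlast] at h4 <;> simp [val] at h4
  · exfalso
    have : (0 : ℤ) ≤ r := Int.natCast_nonneg r
    omega
  · refine ⟨rfl, by omega⟩
  · exfalso; omega

lemma psi_mem_Sch (hd : d ≤ n) {f : Fin (n + r * d + 1) → SStep}
    (hf : f ∈ GoodS r n d) : psi f ∈ Sch r n d := by
  obtain ⟨hfS, hgood⟩ := mem_GoodS.1 hf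
  obtain ⟨hlast, -⟩ := last_right hd hf
  have hcount : ∀ s : SStep, cnt f s = (psi f).count s + List.count s [SStep.right] := by
    intro s
    rw [← count_ofFn, ofFn_eq_psi, hlast, List.count_append]
  have hcd := hcount .down
  have hcr := hcount .right
  have hcg := hcount .diag
  simp only [List.count_singleton, List.count_nil] at hcd hcr hcg
  obtain ⟨h1, h2⟩ := mem_SFun.1 hfS
  have h3 := cnt_right_of_mem hd hfS
  have hlen : (psi f).length = n + r * d := by simp [psi]
  rw [mem_Sch_iff r n d hd]
  have hcd' : (psi f).count .down = d := by simp at hcd; omega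
  have hcr' : (psi f).count .right = r * d := by simp at hcr; omega
  have hcg' : (psi f).count .diag = n - d := by simp at hcg; omega
  refine ⟨hcd', hcr', hcg', fun j => ?_⟩
  by_cases hj : j ≤ n + r * d
  · have htake : (psi f).take j = (List.ofFn f).take j := by
      rw [ofFn_eq_psi, List.take_append_of_le_length (by omega)]
    have hP : 0 ≤ P (gOf r f) j := hgood j (by omega)
    rw [P_eq_take r f j (by omega), sum_val] at hP
    rw [htake]
    omega
  · rw [List.take_of_length_le (by omega)]
    rw [hcd', hcr']
    push_cast
    nlinarith [Int.natCast_nonneg r, Int.natCast_nonneg d]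

lemma exists_psi (hd : d ≤ n) {l : List SStep} (hl : l ∈ Sch r n d) :
    ∃ f ∈ GoodS r n d, psi f = l := by
  rw [mem_Sch_iff r n d hd] at hl
  obtain ⟨h1, h2, h3, h4⟩ := hl
  have hlen : l.length = n + r * d := by
    have := length_eq l
    omega
  set f : Fin (n + r * d + 1) → SStep :=
    fun i => (l ++ [SStep.right]).getD i.val SStep.right with hfdef
  have hofFn : List.ofFn f = l ++ [SStep.right] := by
    apply List.ext_getElem (by simp [hlen])
    intro i hi1 hi2
    rw [List.getElem_ofFn]
    simp only [hfdef]
    rw [List.getD_eq_getElem _ _ (by simpa using hi2)]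
  have hpsi : psi f = l := by
    have := ofFn_eq_psi f
    rw [hofFn] at this
    have hlast : f (Fin.last (n + r * d)) = SStep.right := by
      simp only [hfdef]
      rw [List.getD_append_right _ _ _ _ (by simp [hlen]), Fin.val_last, hlen]
      simp [hlen]
    rw [hlast] at this
    exact (List.append_left_injective _ this).symm ▸ rfl
  refine ⟨f, mem_GoodS.2 ⟨mem_SFun.2 ⟨?_, ?_⟩, ?_⟩, hpsi⟩
  · rw [← count_ofFn, hofFn, List.count_append]
    simpa using h1
  · rw [← count_ofFn, hofFn, List.count_append]
    simpa using h3
  · intro j hj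
    rw [P_eq_take r f j (by omega), hofFn,
      List.take_append_of_le_length (by omega), sum_val]
    have := h4 j
    omega

lemma psi_injOn (hd : d ≤ n) : Set.InjOn (@psi r n d) ↑(GoodS r n d) := by
  intro f hf g hg heq
  have hlf := (last_right hd (by simpa using hf)).1
  have hlg := (last_right hd (by simpa using hg)).1
  apply List.ofFn_injective
  rw [ofFn_eq_psi, ofFn_eq_psi, heq, hlf, hlg]

lemma ncard_Sch (hd : d ≤ n) : (Sch r n d).ncard = (GoodS r n d).card := by
  have himg : Sch r n d = ↑((GoodS r n d).image psi) := by
    ext l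
    simp only [Finset.coe_image, Set.mem_image, Finset.mem_coe]
    constructor
    · intro hl
      obtain ⟨f, hf, hpsi⟩ := exists_psi hd hl
      exact ⟨f, hf, hpsi⟩
    · rintro ⟨f, hf, rfl⟩
      exact psi_mem_Sch hd hf
  rw [himg, Set.ncard_coe_finset, Finset.card_image_of_injOn (psi_injOn hd)]

end Bridge

end SchAux

/-- For `n ≥ 1`, `r ≥ 1`, `0 ≤ d ≤ n`, we have
`(d*r+1) * |Sch_{n,d}^r| = C(n,d) * C(d*r+n, n)`. -/
theorem schroeder_count (r n d : ℕ) (hr : 1 ≤ r) (hn : 1 ≤ n) (hd : d ≤ n) :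
    (d * r + 1) * (Sch r n d).ncard = Nat.choose n d * Nat.choose (d * r + n) n := by
  classical
  have hG : (Sch r n d).ncard = (SchAux.GoodS r n d).card := SchAux.ncard_Sch hd
  have hmain := (SchAux.card_SFun_eq_mul (r := r) (n := n) (d := d) hd).symm.trans
    (SchAux.card_SFun (r := r) (n := n) (d := d) hd)
  set G := (SchAux.GoodS r n d).card with hGdef
  rw [show n + r * d + 1 = d * r + n + 1 from by ring] at hmain
  set M := d * r + n + 1 with hMdef
  -- hmain : M * G = M.choose d * ((M - d).choose (n - d))
  have hMd : M - d = (n - d) + (d * r + 1) := by omega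
  have e1 : M.choose d * d.factorial * (M - d).factorial = M.factorial :=
    Nat.choose_mul_factorial_mul_factorial (by omega)
  have e2 : (M - d).choose (n - d) * (n - d).factorial * (d * r + 1).factorial
      = (M - d).factorial := by
    have h := Nat.choose_mul_factorial_mul_factorial (show n - d ≤ M - d by omega)
    rwa [show M - d - (n - d) = d * r + 1 by omega] at h
  have e3 : n.choose d * d.factorial * (n - d).factorial = n.factorial :=
    Nat.choose_mul_factorial_mul_factorial hd
  have e4 : (d * r + n).choose n * n.factorial * (d * r).factorial
      = (d * r + n).factorial := by
    have h := Nat.choose_mul_factorial_mul_factorial (show n ≤ d * r + n by omega)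
    rwa [show d * r + n - n = d * r by omega] at h
  have key : (d * r + 1) * (M.choose d * ((M - d).choose (n - d)))
        * (d.factorial * ((n - d).factorial * (d * r).factorial))
      = M * (n.choose d * (d * r + n).choose n)
        * (d.factorial * ((n - d).factorial * (d * r).factorial)) := by
    calc (d * r + 1) * (M.choose d * ((M - d).choose (n - d)))
        * (d.factorial * ((n - d).factorial * (d * r).factorial))
        = (M.choose d * d.factorial) *
            ((M - d).choose (n - d) * (n - d).factorial * ((d * r + 1) * (d * r).factorial)) := by
          ring
      _ = (M.choose d * d.factorial) *
            ((M - d).choose (n - d) * (n - d).factorial * (d * r + 1).factorial) := by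
          rw [Nat.factorial_succ]
      _ = M.choose d * d.factorial * (M - d).factorial := by rw [e2]
      _ = M.factorial := e1
      _ = M * (d * r + n).factorial := Nat.factorial_succ _
      _ = M * ((d * r + n).choose n * n.factorial * (d * r).factorial) := by rw [e4]
      _ = M * ((d * r + n).choose n * (n.choose d * d.factorial * (n - d).factorial)
            * (d * r).factorial) := by rw [e3]
      _ = M * (n.choose d * (d * r + n).choose n)
            * (d.factorial * ((n - d).factorial * (d * r).factorial)) := by ring
  have hK : 0 < d.factorial * ((n - d).factorial * (d * r).factorial) :=
    Nat.mul_pos (Nat.factorial_pos _) (Nat.mul_pos (Nat.factorial_pos _) (Nat.factorial_pos _))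
  have hid : (d * r + 1) * (M.choose d * ((M - d).choose (n - d)))
      = M * (n.choose d * (d * r + n).choose n) :=
    Nat.eq_of_mul_eq_mul_right hK key
  have hMpos : 0 < M := by omega
  apply Nat.eq_of_mul_eq_mul_left hMpos
  calc M * ((d * r + 1) * (Sch r n d).ncard)
      = (d * r + 1) * (M * G) := by rw [hG]; ring
    _ = (d * r + 1) * (M.choose d * ((M - d).choose (n - d))) := by rw [hmain]
    _ = M * (n.choose d * (d * r + n).choose n) := hid
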